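/- Let (X,G) be a Cantor dynamical system whose full group has many involutions, V a regular open set, and γ ∈ [G] with spr(γ) ⊄ X \ closure(V). Then there exists a clopen set W ⊆ {x : γ(x) ≠ x} ∩ V with γ(W) ∩ W = ∅, and an involution ρ ∈ [G] with spr(ρ) ⊆ W such that ργ ≠ γρ. -/

import Mathlib

open Set

variable {X : Type*} [TopologicalSpace X]

noncomputable instance Homeomorph.instGroup_of_file : Group (X ≃ₜ X) where
  mul f g := g.trans f
  one := Homeomorph.refl X
  inv := Homeomorph.symm
  mul_assoc _ _ _ := Homeomorph.ext fun _ => rfl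
  one_mul _ := Homeomorph.ext fun _ => rfl
  mul_one _ := Homeomorph.ext fun _ => rfl
  inv_mul_cancel f := Homeomorph.ext fun x => f.symm_apply_apply x

@[simp] theorem Homeomorph.mul_apply' (f g : X ≃ₜ X) (x : X) : (f * g) x = f (g x) := rfl
@[simp] theorem Homeomorph.one_apply' (x : X) : (1 : X ≃ₜ X) x = x := rfl

/-- The support of a homeomorphism. -/
def spr (γ : X ≃ₜ X) : Set X := interior (closure {x | γ x ≠ x})

/-- The orbit of a point under a subgroup of homeomorphisms. -/
def orbitOf (G : Subgroup (X ≃ₜ X)) (x : X) : Set X := {y | ∃ g ∈ G, (g : X ≃ₜ X) x = y}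

/-- The full group of a Cantor dynamical system. -/
def fullGroup (G : Subgroup (X ≃ₜ X)) : Subgroup (X ≃ₜ X) where
  carrier := {γ | ∀ x, γ x ∈ orbitOf G x}
  one_mem' x := ⟨1, G.one_mem, rfl⟩
  mul_mem' {a b} ha hb x := by
    obtain ⟨h, hh, hbx⟩ := hb x
    obtain ⟨g, hg, hax⟩ := ha (b x)
    exact ⟨g * h, G.mul_mem hg hh, by simp only [Homeomorph.mul_apply'] at *; rw [hbx, hax]⟩
  inv_mem' {a} ha := by
    intro x
    obtain ⟨g, hg, hax⟩ := ha (a⁻¹ x)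
    refine ⟨g⁻¹, G.inv_mem hg, ?_⟩
    have : a (a⁻¹ x) = x := a.apply_symm_apply x
    rw [this] at hax
    have : (g⁻¹ : X ≃ₜ X) (g (a⁻¹ x)) = a⁻¹ x := g.symm_apply_apply _
    rw [hax] at this
    exact this


/-- If `spr γ` is not contained in `X \\ closure V`, there is a clopen set `W` inside the moved
part of `V` and an involution supported there which does not commute with `γ`. -/
theorem exists_noncommuting_involution {X : Type*} [TopologicalSpace X] [CompactSpace X] [TopologicalSpace.MetrizableSpace X] [TotallyDisconnectedSpace X] [PerfectSpace X] [Nonempty X]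
    (G : Subgroup (X ≃ₜ X)) (hmi : ∀ A : Set X, A = interior (closure A) → A.Nonempty → ∃ π ∈ fullGroup G, π * π = 1 ∧ π ≠ 1 ∧ spr π ⊆ A)
    (V : Set X) (hV : V = interior (closure V))
    (γ : X ≃ₜ X) (hγ : γ ∈ fullGroup G) (h : ¬ spr γ ⊆ (closure V)ᶜ) :
    ∃ W : Set X, IsClopen W ∧ W ⊆ {x | γ x ≠ x} ∩ V ∧ ⇑γ '' W ∩ W = ∅ ∧
      ∃ ρ ∈ fullGroup G, ρ * ρ = 1 ∧ spr ρ ⊆ W ∧ ρ * γ ≠ γ * ρ := by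
  letI := TopologicalSpace.metrizableSpaceMetric X
  -- find x₀ ∈ spr γ ∩ closure V
  rw [Set.not_subset] at h
  obtain ⟨x₀, hx₀s, hx₀V⟩ := h
  rw [Set.notMem_compl_iff] at hx₀V
  -- spr γ is open, meets closure V, hence meets V
  have hVopen : IsOpen V := hV ▸ isOpen_interior
  have hsopen : IsOpen (spr γ) := isOpen_interior
  obtain ⟨x₁, hx₁s, hx₁V⟩ : (spr γ ∩ V).Nonempty := by
    have := (mem_closure_iff.mp hx₀V) (spr γ) hsopen hx₀s
    exact this.imp fun x hx => ⟨hx.1, hx.2⟩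
  -- x₁ ∈ closure {γ ≠ id}, and spr γ ∩ V is open, so find x ∈ V with γ x ≠ x
  have hx₁cl : x₁ ∈ closure {x | γ x ≠ x} := interior_subset hx₁s
  obtain ⟨x, ⟨hxs, hxV⟩, hxm⟩ : ((spr γ ∩ V) ∩ {x | γ x ≠ x}).Nonempty :=
    mem_closure_iff.mp hx₁cl _ (hsopen.inter hVopen) ⟨hx₁s, hx₁V⟩
  -- separate x and γ x
  obtain ⟨A, B, hA, hB, hγxA, hxB, hAB⟩ := t2_separation hxm
  have hMopen : IsOpen {x | γ x ≠ x} := by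
    have : IsClosed {x | γ x = x} := isClosed_eq γ.continuous continuous_id
    exact this.isOpen_compl
  -- clopen W ∋ x inside V ∩ {γ ≠ id} ∩ B ∩ γ⁻¹ A
  obtain ⟨W, hWclopen, hxW, hWsub⟩ := compact_exists_isClopen_in_isOpen
    (((hVopen.inter hMopen).inter hB).inter (hA.preimage γ.continuous))
    (show x ∈ ((V ∩ {x | γ x ≠ x}) ∩ B) ∩ γ ⁻¹' A from ⟨⟨⟨hxV, hxm⟩, hxB⟩, hγxA⟩)
  have hWV : W ⊆ {x | γ x ≠ x} ∩ V := fun y hy => ⟨(hWsub hy).1.1.2, (hWsub hy).1.1.1⟩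
  have hdisj : ⇑γ '' W ∩ W = ∅ := by
    apply eq_empty_iff_forall_notMem.mpr
    rintro y ⟨⟨z, hzW, rfl⟩, hyW⟩
    have h1 : γ z ∈ A := (hWsub hzW).2
    have h2 : γ z ∈ B := (hWsub hyW).1.2
    exact (Set.disjoint_iff.mp hAB ⟨h1, h2⟩)
  -- W is regular open
  have hWreg : W = interior (closure W) := by
    rw [hWclopen.isClosed.closure_eq, hWclopen.isOpen.interior_eq]
  obtain ⟨ρ, hρG, hρ2, hρ1, hρspr⟩ := hmi W hWreg ⟨x, hxW⟩
  refine ⟨W, hWclopen, hWV, hdisj, ρ, hρG, hρ2, hρspr, ?_⟩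
  -- moved set of ρ is inside W
  have hρmoved : {x | ρ x ≠ x} ⊆ W := by
    intro y hy
    have hopen : IsOpen {x | ρ x ≠ x} := by
      have : IsClosed {x | ρ x = x} := isClosed_eq ρ.continuous continuous_id
      exact this.isOpen_compl
    exact hρspr (interior_maximal (subset_closure) hopen hy)
  -- get a moved point
  obtain ⟨y, hy⟩ : ∃ y, ρ y ≠ y := by
    by_contra hc
    push_neg at hc
    exact hρ1 (Homeomorph.ext fun z => hc z)
  have hyW : y ∈ W := hρmoved hy
  have hρρ : ∀ z, ρ (ρ z) = z := fun z => by
    have := congrFun (congrArg (fun f : X ≃ₜ X => (f : X → X)) hρ2) z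
    simpa using this
  have hρyW : ρ y ∈ W := hρmoved (show ρ (ρ y) ≠ ρ y by
    rw [hρρ]; exact fun hc => hy hc.symm)
  intro hcomm
  have := congrFun (congrArg (fun f : X ≃ₜ X => (f : X → X)) hcomm) y
  simp only [Homeomorph.mul_apply'] at this
  -- ρ (γ y) = γ (ρ y); but γ y ∉ W so ρ (γ y) = γ y, and γ (ρ y) = γ y forces ρ y = y
  have hγyW : γ y ∉ W := by
    intro hc
    exact absurd hdisj (by
      apply (Set.nonempty_iff_ne_empty.mp _)
      exact ⟨γ y, ⟨y, hyW, rfl⟩, hc⟩)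
  have hfix : ρ (γ y) = γ y := by
    by_contra hc
    exact hγyW (hρmoved hc)
  rw [hfix] at this
  exact hy (γ.injective this.symm)
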